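/- Let G be a DAG on d nodes with continuous causal mechanisms f = (f_1,…,f_d), each f_i continuous on a compact domain. For every ε > 0 there exist continuous functions f̂ = (f̂_1,…,f̂_d) realizable as one-hidden-layer neural networks such that for every noise vector e ∈ [0,1]^d, the vectors z(e) and ẑ(e) obtained by recursively evaluating f and f̂ respectively in topological order of G satisfy ‖z(e) − ẑ(e)‖ < ε. -/

import Mathlib

open Set Filter

/-- A finite family of reals has a common upper bound at least `c`. -/
lemma aux_fin_bound {d : ℕ} (g : Fin d → ℝ) (c : ℝ) (hc : 0 ≤ c) :
    ∃ x, c ≤ x ∧ ∀ i, g i ≤ x := by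
  refine ⟨c + ∑ i, |g i|, le_add_of_nonneg_right (Finset.sum_nonneg fun i _ => abs_nonneg _), ?_⟩
  intro i
  have h1 : |g i| ≤ ∑ j, |g j| :=
    Finset.single_le_sum (f := fun j => |g j|) (fun j _ => abs_nonneg _) (Finset.mem_univ i)
  have := le_abs_self (g i)
  linarith

/-- A finite family of positive reals has a common positive lower bound at most `c`. -/
lemma aux_fin_pos_lb {d : ℕ} (g : Fin d → ℝ) (hg : ∀ i, 0 < g i) (c : ℝ) (hc : 0 < c) :
    ∃ x, 0 < x ∧ x ≤ c ∧ ∀ i, x ≤ g i := by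
  rcases Nat.eq_zero_or_pos d with h | h
  · exact ⟨c, hc, le_rfl, fun i => absurd (i.2) (by omega)⟩
  · have hne : (Finset.univ : Finset (Fin d)).Nonempty := ⟨⟨0, h⟩, Finset.mem_univ _⟩
    refine ⟨min c (Finset.univ.inf' hne g), lt_min hc ?_, min_le_left _ _, fun i => ?_⟩
    · exact (Finset.lt_inf'_iff hne).2 fun i _ => hg i
    · exact le_trans (min_le_right _ _) (Finset.inf'_le _ (Finset.mem_univ i))

/-- A continuous function with finite limits at `±∞` is bounded. -/
lemma aux_sigma_bdd (σ : ℝ → ℝ) (hσc : Continuous σ)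
    (hσ1 : Tendsto σ atTop (nhds 1)) (hσ0 : Tendsto σ atBot (nhds 0)) :
    ∃ M, 1 ≤ M ∧ ∀ x, |σ x| ≤ M := by
  obtain ⟨T1, hT1⟩ := eventually_atTop.mp (hσ1 (Metric.ball_mem_nhds (1:ℝ) one_pos))
  obtain ⟨T0, hT0⟩ := eventually_atBot.mp (hσ0 (Metric.ball_mem_nhds (0:ℝ) one_pos))
  obtain ⟨C, hC⟩ := (isCompact_Icc (a := min T0 T1) (b := max T0 T1)).exists_bound_of_continuousOn
    hσc.continuousOn
  refine ⟨max (C + 2) 2, le_trans (by norm_num) (le_max_right _ _), fun x => ?_⟩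
  rcases le_or_gt x (min T0 T1) with hx | hx
  · have h := hT0 x (le_trans hx (min_le_left _ _))
    rw [Metric.mem_ball, Real.dist_eq, sub_zero] at h
    exact le_trans h.le (le_trans (by norm_num) (le_max_right _ _))
  rcases le_or_gt x (max T0 T1) with hx2 | hx2
  · have h := hC x ⟨hx.le, hx2⟩
    rw [Real.norm_eq_abs] at h
    exact le_trans h (le_trans (by linarith) (le_max_left _ _))
  · have h := hT1 x (le_trans (le_max_right _ _) hx2.le)
    rw [Metric.mem_ball, Real.dist_eq] at h
    have : |σ x| ≤ |σ x - 1| + 1 := by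
      calc |σ x| = |(σ x - 1) + 1| := by ring_nf
      _ ≤ |σ x - 1| + |(1:ℝ)| := abs_add_le _ _
      _ = |σ x - 1| + 1 := by norm_num
    exact le_trans this (le_trans (by linarith) (le_max_right _ _))


/-- 1-D universal approximation by sums of sigmoids, on a compact interval. -/
lemma aux_onedim (σ : ℝ → ℝ) (hσc : Continuous σ)
    (hσ1 : Tendsto σ atTop (nhds 1)) (hσ0 : Tendsto σ atBot (nhds 0))
    (g : ℝ → ℝ) (hg : Continuous g) (A B ε : ℝ) (hAB : A < B) (hε : 0 < ε) :
    ∃ (n : ℕ) (c a b : ℕ → ℝ) (bb : ℝ), ∀ t ∈ Icc A B,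
      |g t - ((∑ l ∈ Finset.range n, c l * σ (a l * t + b l)) + bb)| < ε := by
  obtain ⟨M, hM1, hM⟩ := aux_sigma_bdd σ hσc hσ1 hσ0
  have hM0 : (0:ℝ) < M + 1 := by linarith
  set ε1 : ℝ := ε / (4 * (M + 1)) with hε1def
  have hε1 : 0 < ε1 := by positivity
  -- uniform continuity
  have huc := (isCompact_Icc (a := A) (b := B)).uniformContinuousOn_of_continuous
    hg.continuousOn
  rw [Metric.uniformContinuousOn_iff] at huc
  obtain ⟨δ, hδ, hmod⟩ := huc ε1 hε1
  -- number of pieces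
  obtain ⟨N0, hN0⟩ := exists_nat_gt ((B - A) / δ)
  set N : ℕ := N0 + 1 with hNdef
  have hNpos : 0 < N := Nat.succ_pos _
  have hNR : (B - A) / δ < N := lt_of_lt_of_le hN0 (by exact_mod_cast Nat.le_succ N0)
  set h : ℝ := (B - A) / N with hhdef
  have hh : 0 < h := div_pos (by linarith) (by positivity)
  have hNh : (N : ℝ) * h = B - A := by
    rw [hhdef]; have hN0' : (N:ℝ) ≠ 0 := by positivity
    field_simp
  have hhδ : h < δ := by
    rw [hhdef, div_lt_iff₀ (by positivity)]
    calc B - A = ((B - A) / δ) * δ := by field_simp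
    _ < N * δ := by
      apply mul_lt_mul_of_pos_right hNR hδ
    _ = δ * N := by ring
  -- tail accuracy
  set η : ℝ := ε / (4 * (N * ε1 + 1)) with hηdef
  have hNε1 : (0:ℝ) ≤ N * ε1 := by positivity
  have hη : 0 < η := by positivity
  obtain ⟨T1, hT1⟩ := eventually_atTop.mp (hσ1 (Metric.ball_mem_nhds (1:ℝ) hη))
  obtain ⟨T0, hT0⟩ := eventually_atBot.mp (hσ0 (Metric.ball_mem_nhds (0:ℝ) hη))
  set T' : ℝ := max (max T1 (-T0)) 0 + 1 with hT'def
  have hT'1 : T1 ≤ T' := le_trans (le_trans (le_max_left _ _) (le_max_left _ _)) (by linarith)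
  have hT'0 : -T' ≤ T0 := by
    have : -T0 ≤ T' := le_trans (le_trans (le_max_right _ _) (le_max_left _ _)) (by linarith)
    linarith
  have hT'pos : 0 < T' := by
    have h0 : (0:ℝ) ≤ max (max T1 (-T0)) 0 := le_max_right _ _
    simp only [hT'def]; linarith
  set cc : ℝ := 2 * T' / h with hccdef
  have hcc : 0 < cc := by positivity
  have hcch : cc * (h / 2) = T' := by
    rw [hccdef]; field_simp
  -- the partition points
  set pts : ℕ → ℝ := fun k => A + k * h with hptsdef
  have hptsIcc : ∀ k : ℕ, k ≤ N → pts k ∈ Icc A B := by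
    intro k hk
    constructor
    · simp only [hptsdef]
      have : (0:ℝ) ≤ (k:ℝ) * h := by positivity
      linarith
    · simp only [hptsdef]
      have : (k:ℝ) * h ≤ N * h := by
        apply mul_le_mul_of_nonneg_right _ hh.le
        exact_mod_cast hk
      linarith [hNh]
  have hΔ : ∀ k : ℕ, k < N → |g (pts (k+1)) - g (pts k)| ≤ ε1 := by
    intro k hk
    have h1 := hmod (pts (k+1)) (hptsIcc _ hk) (pts k) (hptsIcc _ (le_of_lt hk))
    rw [Real.dist_eq, Real.dist_eq] at h1
    apply le_of_lt
    apply h1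
    have : pts (k+1) - pts k = h := by
      simp only [hptsdef]; push_cast; ring
    rw [this, abs_of_pos hh]; exact hhδ
  -- the network
  refine ⟨N, fun k => g (pts (k+1)) - g (pts k), fun _ => cc,
    fun k => -(cc * (A + k * h + h / 2)), g A, ?_⟩
  intro t ht
  obtain ⟨htA, htB⟩ := ht
  -- locate t
  set k0 : ℕ := min (N - 1) ⌊(t - A) / h⌋₊ with hk0def
  have hk0N : k0 < N := lt_of_le_of_lt (min_le_left _ _) (by omega)
  have htA' : 0 ≤ (t - A) / h := div_nonneg (by linarith) hh.le
  have hlow : pts k0 ≤ t := by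
    have h1 : (k0 : ℝ) ≤ (t - A) / h := by
      calc (k0:ℝ) ≤ (⌊(t - A) / h⌋₊ : ℝ) := by exact_mod_cast min_le_right _ _
      _ ≤ (t - A) / h := Nat.floor_le htA'
    have h2 := (le_div_iff₀ hh).mp h1
    simp only [hptsdef]
    linarith
  have hupper : t ≤ pts (k0 + 1) := by
    by_cases hc : ⌊(t - A) / h⌋₊ ≤ N - 1
    · have hk0f : k0 = ⌊(t - A) / h⌋₊ := min_eq_right hc
      have h2 : (t - A) / h < (k0 : ℝ) + 1 := by
        rw [hk0f]; push_cast; exact Nat.lt_floor_add_one _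
      have h3 : t - A < ((k0:ℝ) + 1) * h := by
        rw [div_lt_iff₀ hh] at h2; linarith
      simp only [hptsdef]; push_cast; linarith
    · have hk0f : k0 = N - 1 := min_eq_left (by omega)
      have : k0 + 1 = N := by omega
      rw [this]
      have := hNh
      simp only [hptsdef]; linarith
  -- notation for the pieces
  set Δ : ℕ → ℝ := fun k => g (pts (k+1)) - g (pts k) with hΔdef
  set S : ℕ → ℝ := fun k => σ (cc * t + -(cc * (A + k * h + h / 2))) with hSdef
  -- far-field estimates
  have hfar1 : ∀ k, k < k0 → |S k - 1| < η := by
    intro k hk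
    have hk1 : (k:ℝ) + 1 ≤ (k0:ℝ) := by exact_mod_cast hk
    have hdist : h / 2 ≤ t - (A + k * h + h / 2) := by
      have h5 : A + (k0:ℝ) * h ≤ t := hlow
      have h6 : ((k:ℝ) + 1) * h ≤ (k0:ℝ) * h := mul_le_mul_of_nonneg_right hk1 hh.le
      linarith
    have harg : T' ≤ cc * t + -(cc * (A + k * h + h / 2)) := by
      have : cc * (h/2) ≤ cc * (t - (A + k * h + h / 2)) :=
        mul_le_mul_of_nonneg_left hdist hcc.le
      rw [hcch] at this; linarith
    have := hT1 _ (le_trans hT'1 harg)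
    rwa [Metric.mem_ball, Real.dist_eq] at this
  have hfar0 : ∀ k, k0 < k → |S k| < η := by
    intro k hk
    have hk1 : (k0:ℝ) + 1 ≤ (k:ℝ) := by exact_mod_cast hk
    have hdist : t - (A + k * h + h / 2) ≤ -(h / 2) := by
      have h2 : t ≤ A + ((k0:ℝ) + 1) * h := by
        have := hupper; simp only [hptsdef] at this; push_cast at this; linarith
      have h6 : ((k0:ℝ) + 1) * h ≤ (k:ℝ) * h := mul_le_mul_of_nonneg_right hk1 hh.le
      linarith
    have harg : cc * t + -(cc * (A + k * h + h / 2)) ≤ -T' := by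
      have : cc * (t - (A + k * h + h / 2)) ≤ cc * (-(h/2)) :=
        mul_le_mul_of_nonneg_left hdist hcc.le
      linarith [hcch]
    have := hT0 _ (le_trans harg hT'0)
    rw [Metric.mem_ball, Real.dist_eq, sub_zero] at this
    exact this
  -- split the sum
  have hk0N' : k0 + 1 ≤ N := hk0N
  have hsplit : ∑ l ∈ Finset.range N, Δ l * S l =
      ((∑ l ∈ Finset.range k0, Δ l * S l) + Δ k0 * S k0) +
        ∑ l ∈ Finset.Ico (k0+1) N, Δ l * S l := by
    rw [← Finset.sum_range_succ (fun l => Δ l * S l) k0]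
    rw [Finset.range_eq_Ico,
      ← Finset.sum_Ico_consecutive (fun l => Δ l * S l) (Nat.zero_le (k0+1)) hk0N']
    rw [Finset.range_eq_Ico]
  have htel : ∑ l ∈ Finset.range k0, Δ l = g (pts k0) - g A := by
    have := Finset.sum_range_sub (fun k => g (pts k)) k0
    simp only [hΔdef]
    rw [this]
    have : pts 0 = A := by simp [hptsdef]
    rw [this]
  set E3 : ℝ := ∑ l ∈ Finset.range k0, Δ l * (S l - 1) with hE3def
  set E4 : ℝ := ∑ l ∈ Finset.Ico (k0+1) N, Δ l * S l with hE4def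
  have h34 : ∑ l ∈ Finset.range k0, Δ l * S l = E3 + (g (pts k0) - g A) := by
    rw [← htel, hE3def, ← Finset.sum_add_distrib]
    apply Finset.sum_congr rfl
    intros; ring
  -- individual bounds
  have hE1 : |g t - g (pts k0)| < ε1 := by
    have h1 := hmod t ⟨htA, htB⟩ (pts k0) (hptsIcc _ (le_of_lt hk0N))
    simp only [Real.dist_eq] at h1
    apply h1
    have hd : t - pts k0 ≤ h := by
      have := hupper; simp only [hptsdef] at this ⊢; push_cast at this; linarith
    rw [abs_of_nonneg (by linarith [hlow] : (0:ℝ) ≤ t - pts k0)]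
    linarith
  have hE2 : |Δ k0 * S k0| ≤ ε1 * M := by
    rw [abs_mul]
    exact mul_le_mul (hΔ k0 hk0N) (hM _) (abs_nonneg _) hε1.le
  have hbd3 : |E3| ≤ (N:ℝ) * (ε1 * η) := by
    calc |E3| ≤ ∑ l ∈ Finset.range k0, |Δ l * (S l - 1)| := Finset.abs_sum_le_sum_abs _ _
    _ ≤ ∑ _l ∈ Finset.range k0, ε1 * η := by
      apply Finset.sum_le_sum
      intro l hl
      rw [Finset.mem_range] at hl
      rw [abs_mul]
      exact mul_le_mul (hΔ l (lt_trans hl hk0N)) (hfar1 l hl).le (abs_nonneg _) hε1.le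
    _ = (k0:ℝ) * (ε1 * η) := by rw [Finset.sum_const, Finset.card_range, nsmul_eq_mul]
    _ ≤ (N:ℝ) * (ε1 * η) := by
      apply mul_le_mul_of_nonneg_right _ (by positivity)
      exact_mod_cast le_of_lt hk0N
  have hbd4 : |E4| ≤ (N:ℝ) * (ε1 * η) := by
    calc |E4| ≤ ∑ l ∈ Finset.Ico (k0+1) N, |Δ l * S l| := Finset.abs_sum_le_sum_abs _ _
    _ ≤ ∑ _l ∈ Finset.Ico (k0+1) N, ε1 * η := by
      apply Finset.sum_le_sum
      intro l hl
      rw [Finset.mem_Ico] at hl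
      rw [abs_mul]
      exact mul_le_mul (hΔ l hl.2) (hfar0 l hl.1).le (abs_nonneg _) hε1.le
    _ = ((Finset.Ico (k0+1) N).card : ℝ) * (ε1 * η) := by rw [Finset.sum_const, nsmul_eq_mul]
    _ ≤ (N:ℝ) * (ε1 * η) := by
      apply mul_le_mul_of_nonneg_right _ (by positivity)
      rw [Nat.card_Ico]
      exact_mod_cast Nat.sub_le _ _
  -- global constants
  have hc1 : ε1 * (M + 1) = ε / 4 := by
    rw [hε1def]; field_simp
  have hc2 : η * ((N:ℝ) * ε1 + 1) = ε / 4 := by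
    rw [hηdef]; field_simp
  have hc3 : 2 * ((N:ℝ) * (ε1 * η)) ≤ ε / 2 := by
    have h7 : (N:ℝ) * (ε1 * η) + η = ε / 4 := by linear_combination hc2
    linarith
  -- assemble
  have hkey : g t - ((∑ l ∈ Finset.range N, Δ l * S l) + g A) =
      (g t - g (pts k0)) - E3 - Δ k0 * S k0 - E4 := by
    rw [hsplit, h34]; ring
  have hgoal : |g t - ((∑ l ∈ Finset.range N, Δ l * S l) + g A)| < ε := by
    rw [hkey]
    obtain ⟨l1, r1⟩ := abs_lt.mp hE1
    obtain ⟨l2, r2⟩ := abs_le.mp hE2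
    obtain ⟨l3, r3⟩ := abs_le.mp hbd3
    obtain ⟨l4, r4⟩ := abs_le.mp hbd4
    have hc1' : ε1 + ε1 * M = ε / 4 := by linear_combination hc1
    rw [abs_lt]
    constructor <;> linarith [hε, hc1', hc3]
  simp only [hΔdef, hSdef] at hgoal
  exact hgoal

/-- One-hidden-layer neural network functions on `ι → ℝ`. -/
def IsNet {ι : Type*} [Fintype ι] (σ : ℝ → ℝ) (F : (ι → ℝ) → ℝ) : Prop :=
  ∃ (n : ℕ) (wb : Fin n → ℝ) (w : Fin n → ι → ℝ) (b : Fin n → ℝ) (bb : ℝ),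
    ∀ x, F x = (∑ l, wb l * σ ((∑ j, w l j * x j) + b l)) + bb

lemma isNet_const {ι : Type*} [Fintype ι] (σ : ℝ → ℝ) (c : ℝ) :
    IsNet σ (fun _ : ι → ℝ => c) :=
  ⟨0, 0, 0, 0, c, fun x => by simp⟩

lemma isNet_add {ι : Type*} [Fintype ι] {σ : ℝ → ℝ} {F G : (ι → ℝ) → ℝ}
    (hF : IsNet σ F) (hG : IsNet σ G) : IsNet σ (fun x => F x + G x) := by
  obtain ⟨n1, wb1, w1, b1, bb1, h1⟩ := hF
  obtain ⟨n2, wb2, w2, b2, bb2, h2⟩ := hG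
  refine ⟨n1 + n2, Fin.append wb1 wb2, Fin.append w1 w2, Fin.append b1 b2, bb1 + bb2, ?_⟩
  intro x
  show F x + G x = _
  rw [h1 x, h2 x, Fin.sum_univ_add]
  simp only [Fin.append_left, Fin.append_right]
  ring

lemma isNet_smul {ι : Type*} [Fintype ι] {σ : ℝ → ℝ} {F : (ι → ℝ) → ℝ}
    (c : ℝ) (hF : IsNet σ F) : IsNet σ (fun x => c * F x) := by
  obtain ⟨n, wb, w, b, bb, h⟩ := hF
  refine ⟨n, fun l => c * wb l, w, b, c * bb, fun x => ?_⟩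
  show c * F x = _
  rw [h x, mul_add, Finset.mul_sum]
  congr 1
  exact Finset.sum_congr rfl fun l _ => by ring

lemma isNet_sum {ι : Type*} [Fintype ι] {σ : ℝ → ℝ} {m : ℕ}
    (G : Fin m → (ι → ℝ) → ℝ) (h : ∀ i, IsNet σ (G i)) :
    IsNet σ (fun x => ∑ i, G i x) := by
  classical
  suffices H : ∀ s : Finset (Fin m), IsNet σ (fun x => ∑ i ∈ s, G i x) from H _
  intro s
  induction s using Finset.induction_on with
  | empty => simpa using isNet_const σ 0
  | insert a s' hni ih =>
    have := isNet_add (h a) ih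
    simpa [Finset.sum_insert hni] using this

section UAT
variable {ι : Type} [Fintype ι]

/-- The ridge cosine as a continuous map on a set `K`. -/
noncomputable def ridge (K : Set (ι → ℝ)) (w : ι → ℝ) (c : ℝ) : C(K, ℝ) :=
  ⟨fun x => Real.cos ((∑ j, w j * (x : ι → ℝ) j) + c), by
    apply Real.continuous_cos.comp
    apply Continuous.add _ continuous_const
    apply continuous_finset_sum
    intro j _
    exact continuous_const.mul ((continuous_apply j).comp continuous_subtype_val)⟩

/-- Universal approximation on a compact set by one-hidden-layer networks. -/
lemma aux_uat (σ : ℝ → ℝ) (hσc : Continuous σ)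
    (hσ1 : Tendsto σ atTop (nhds 1)) (hσ0 : Tendsto σ atBot (nhds 0))
    (K : Set (ι → ℝ)) (hK : IsCompact K) (F : (ι → ℝ) → ℝ) (hF : Continuous F)
    (ε : ℝ) (hε : 0 < ε) :
    ∃ G : (ι → ℝ) → ℝ, IsNet σ G ∧ ∀ x ∈ K, |F x - G x| < ε := by
  classical
  haveI : CompactSpace K := isCompact_iff_compactSpace.mp hK
  set S : Set C(K, ℝ) := {p | ∃ (w : ι → ℝ) (c : ℝ), p = ridge K w c} with hSdef
  -- the span of S is closed under multiplication
  have hmulS : ∀ p ∈ S, ∀ q ∈ S, p * q ∈ Submodule.span ℝ S := by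
    rintro p ⟨w1, c1, rfl⟩ q ⟨w2, c2, rfl⟩
    have hkey : ridge K w1 c1 * ridge K w2 c2 =
        (2⁻¹ : ℝ) • ridge K (fun j => w1 j + w2 j) (c1 + c2) +
        (2⁻¹ : ℝ) • ridge K (fun j => w1 j - w2 j) (c1 - c2) := by
      ext x
      simp only [ContinuousMap.mul_apply, ContinuousMap.add_apply, ContinuousMap.smul_apply,
        ridge, ContinuousMap.coe_mk, smul_eq_mul]
      have e1 : (∑ j, (w1 j + w2 j) * (x : ι → ℝ) j) + (c1 + c2) =
          ((∑ j, w1 j * (x : ι → ℝ) j) + c1) + ((∑ j, w2 j * (x : ι → ℝ) j) + c2) := by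
        have : ∀ j ∈ Finset.univ, (w1 j + w2 j) * (x : ι → ℝ) j
            = w1 j * (x : ι → ℝ) j + w2 j * (x : ι → ℝ) j := fun j _ => by ring
        rw [Finset.sum_congr rfl this, Finset.sum_add_distrib]
        ring
      have e2 : (∑ j, (w1 j - w2 j) * (x : ι → ℝ) j) + (c1 - c2) =
          ((∑ j, w1 j * (x : ι → ℝ) j) + c1) - ((∑ j, w2 j * (x : ι → ℝ) j) + c2) := by
        have : ∀ j ∈ Finset.univ, (w1 j - w2 j) * (x : ι → ℝ) j
            = w1 j * (x : ι → ℝ) j - w2 j * (x : ι → ℝ) j := fun j _ => by ring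
        rw [Finset.sum_congr rfl this, Finset.sum_sub_distrib]
        ring
      rw [e1, e2]
      have hca := Real.cos_add ((∑ j, w1 j * (x : ι → ℝ) j) + c1) ((∑ j, w2 j * (x : ι → ℝ) j) + c2)
      have hcs := Real.cos_sub ((∑ j, w1 j * (x : ι → ℝ) j) + c1) ((∑ j, w2 j * (x : ι → ℝ) j) + c2)
      linarith [hca, hcs]
    rw [hkey]
    refine Submodule.add_mem _ ?_ ?_ <;>
      exact Submodule.smul_mem _ _ (Submodule.subset_span ⟨_, _, rfl⟩)
  have hspanmul : ∀ x ∈ Submodule.span ℝ S, ∀ y ∈ Submodule.span ℝ S,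
      x * y ∈ Submodule.span ℝ S := by
    intro x hx
    induction hx using Submodule.span_induction with
    | mem p hp =>
      intro y hy
      induction hy using Submodule.span_induction with
      | mem q hq => exact hmulS p hp q hq
      | zero => simpa using Submodule.zero_mem _
      | add a b _ _ iha ihb => rw [mul_add]; exact Submodule.add_mem _ iha ihb
      | smul r a _ iha => rw [mul_smul_comm]; exact Submodule.smul_mem _ _ iha
    | zero => intro y hy; simpa using Submodule.zero_mem _
    | add a b _ _ iha ihb =>
      intro y hy; rw [add_mul]; exact Submodule.add_mem _ (iha y hy) (ihb y hy)
    | smul r a _ iha =>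
      intro y hy; rw [smul_mul_assoc]; exact Submodule.smul_mem _ _ (iha y hy)
  -- 1 belongs to S
  have honeS : (1 : C(K, ℝ)) ∈ S := by
    refine ⟨0, 0, ?_⟩
    ext x
    simp [ridge]
  -- the subalgebra generated by S is contained in the span of S
  have hadj_le : ∀ g : C(K, ℝ), g ∈ Algebra.adjoin ℝ S → g ∈ Submodule.span ℝ S := by
    intro g hg
    induction hg using Algebra.adjoin_induction with
    | mem p hp => exact Submodule.subset_span hp
    | algebraMap r =>
      rw [Algebra.algebraMap_eq_smul_one]
      exact Submodule.smul_mem _ _ (Submodule.subset_span honeS)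
    | add a b _ _ iha ihb => exact Submodule.add_mem _ iha ihb
    | mul a b ha hb iha ihb => exact hspanmul _ iha _ ihb
  -- separation of points
  have hsep : (Algebra.adjoin ℝ S).SeparatesPoints := by
    intro x y hxy
    have hvne : (x : ι → ℝ) ≠ (y : ι → ℝ) := fun hc => hxy (Subtype.ext hc)
    have : ∃ j, (x : ι → ℝ) j ≠ (y : ι → ℝ) j := by
      by_contra hcon
      push_neg at hcon
      exact hvne (funext hcon)
    obtain ⟨j, hj⟩ := this
    set u := (x : ι → ℝ) j with hu
    set v := (y : ι → ℝ) j with hv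
    set s : ℝ := Real.pi / (2 * (|u| + |v| + 1)) with hs
    have hden : (0:ℝ) < |u| + |v| + 1 := by positivity
    have hspos : 0 < s := by
      rw [hs]; exact div_pos Real.pi_pos (by positivity)
    have hbndu : |s * u| < Real.pi / 2 := by
      rw [abs_mul, abs_of_pos hspos, hs]
      rw [div_mul_eq_mul_div, div_lt_div_iff₀ (by positivity) (by norm_num)]
      nlinarith [abs_nonneg u, abs_nonneg v, Real.pi_pos]
    have hbndv : |s * v| < Real.pi / 2 := by
      rw [abs_mul, abs_of_pos hspos, hs]
      rw [div_mul_eq_mul_div, div_lt_div_iff₀ (by positivity) (by norm_num)]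
      nlinarith [abs_nonneg u, abs_nonneg v, Real.pi_pos]
    set w : ι → ℝ := fun j' => if j' = j then s else 0 with hw
    have hsum : ∀ p : K, (∑ j', w j' * (p : ι → ℝ) j') = s * (p : ι → ℝ) j := by
      intro p
      rw [hw]
      rw [Finset.sum_eq_single j]
      · simp
      · intro b _ hb; simp [hb]
      · intro hb; exact absurd (Finset.mem_univ j) hb
    refine ⟨(ridge K w (Real.pi / 2) : C(K, ℝ)), ?_, ?_⟩
    · exact ⟨ridge K w (Real.pi / 2), Algebra.subset_adjoin ⟨w, Real.pi / 2, rfl⟩, rfl⟩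
    · simp only [ridge, ContinuousMap.coe_mk]
      rw [hsum x, hsum y]
      intro hcon
      have h1 : s * u + Real.pi / 2 ∈ Icc 0 Real.pi := by
        obtain ⟨l, r⟩ := abs_lt.mp hbndu
        constructor <;> linarith
      have h2 : s * v + Real.pi / 2 ∈ Icc 0 Real.pi := by
        obtain ⟨l, r⟩ := abs_lt.mp hbndv
        constructor <;> linarith
      have := Real.injOn_cos h1 h2 hcon
      have hne : s * u ≠ s * v := fun hc => hj (mul_left_cancel₀ (ne_of_gt hspos) hc)
      exact hne (by linarith)
  -- apply Stone-Weierstrass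
  set Frest : C(K, ℝ) := ⟨fun x => F (x : ι → ℝ), hF.comp continuous_subtype_val⟩ with hFrest
  obtain ⟨g0, hg0near⟩ := ContinuousMap.exists_mem_subalgebra_near_continuousMap_of_separatesPoints
    (Algebra.adjoin ℝ S) hsep Frest (ε/2) (half_pos hε)
  have hg0span := hadj_le (g0 : C(K, ℝ)) g0.2
  rw [Submodule.mem_span_set'] at hg0span
  obtain ⟨m, cf, elems, hsum⟩ := hg0span
  -- bound K
  obtain ⟨r, hr⟩ := hK.isBounded.subset_closedBall 0
  set RK : ℝ := max r 0 with hRKdef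
  have hRK0 : 0 ≤ RK := le_max_right _ _
  have hRK : ∀ x ∈ K, ∀ j, |x j| ≤ RK := by
    intro x hx j
    have h1 : dist x (0 : ι → ℝ) ≤ r := Metric.mem_closedBall.mp (hr hx)
    have h2 : dist (x j) ((0 : ι → ℝ) j) ≤ dist x 0 := dist_le_pi_dist x 0 j
    rw [Real.dist_eq] at h2
    simp only [Pi.zero_apply, sub_zero] at h2
    exact le_trans h2 (le_trans h1 (le_max_left _ _))
  set Csum : ℝ := ∑ i, |cf i| with hCsumdef
  have hCsum : 0 ≤ Csum := Finset.sum_nonneg fun i _ => abs_nonneg _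
  set ε2 : ℝ := ε / (2 * (Csum + 1)) with hε2def
  have hε2 : 0 < ε2 := by positivity
  -- ridge data of the span elements
  choose wfun cfun hwc using fun i : Fin m => (elems i).2
  set Ti : Fin m → ℝ := fun i => ∑ j, |wfun i j| * RK with hTidef
  have hTi0 : ∀ i, 0 ≤ Ti i := fun i =>
    Finset.sum_nonneg fun j _ => mul_nonneg (abs_nonneg _) hRK0
  have hTib : ∀ i, ∀ x ∈ K, |∑ j, wfun i j * x j| ≤ Ti i := by
    intro i x hx
    calc |∑ j, wfun i j * x j| ≤ ∑ j, |wfun i j * x j| := Finset.abs_sum_le_sum_abs _ _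
    _ ≤ ∑ j, |wfun i j| * RK := by
      apply Finset.sum_le_sum
      intro j _
      rw [abs_mul]
      exact mul_le_mul_of_nonneg_left (hRK x hx j) (abs_nonneg _)
  -- 1-d approximations of the shifted cosines
  have h1d : ∀ i : Fin m, ∃ (n : ℕ) (c a b : ℕ → ℝ) (bb : ℝ), ∀ t ∈ Icc (-(Ti i + 1)) (Ti i + 1),
      |Real.cos (t + cfun i) - ((∑ l ∈ Finset.range n, c l * σ (a l * t + b l)) + bb)| < ε2 := by
    intro i
    exact aux_onedim σ hσc hσ1 hσ0 (fun t => Real.cos (t + cfun i))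
      (Real.continuous_cos.comp (continuous_id.add continuous_const))
      (-(Ti i + 1)) (Ti i + 1) ε2 (by linarith [hTi0 i]) hε2
  choose ni nc na nb nbb hnet using h1d
  set Gi : Fin m → (ι → ℝ) → ℝ := fun i x =>
    (∑ l ∈ Finset.range (ni i), nc i l * σ (na i l * (∑ j, wfun i j * x j) + nb i l)) + nbb i
    with hGidef
  have hGinet : ∀ i, IsNet σ (Gi i) := by
    intro i
    refine ⟨ni i, fun l : Fin (ni i) => nc i l, fun l j => na i (l : ℕ) * wfun i j,
      fun l => nb i (l : ℕ), nbb i, ?_⟩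
    intro x
    show (∑ l ∈ Finset.range (ni i), nc i l * σ (na i l * (∑ j, wfun i j * x j) + nb i l)) + nbb i = _
    congr 1
    rw [← Fin.sum_univ_eq_sum_range (fun l => nc i l * σ (na i l * (∑ j, wfun i j * x j) + nb i l)) (ni i)]
    apply Finset.sum_congr rfl
    intro l _
    have harg : na i (l : ℕ) * (∑ j, wfun i j * x j) = ∑ j, na i (l : ℕ) * wfun i j * x j := by
      rw [Finset.mul_sum]
      exact Finset.sum_congr rfl fun j _ => by ring
    simp only []
    rw [harg]
  refine ⟨fun x => ∑ i, cf i * Gi i x, isNet_sum _ fun i => isNet_smul _ (hGinet i), ?_⟩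
  intro x hx
  set xk : K := ⟨x, hx⟩ with hxk
  -- SW closeness pointwise
  have h1 : |F x - (g0 : C(K, ℝ)) xk| < ε / 2 := by
    have hb := ContinuousMap.norm_coe_le_norm ((g0 : C(K, ℝ)) - Frest) xk
    have : ((g0 : C(K, ℝ)) - Frest) xk = (g0 : C(K, ℝ)) xk - F x := by
      simp [ContinuousMap.sub_apply, hFrest]; rfl
    rw [this, Real.norm_eq_abs] at hb
    have := lt_of_le_of_lt hb hg0near
    rwa [abs_sub_comm]
  -- evaluate the span representation
  have h2 : (g0 : C(K, ℝ)) xk = ∑ i, cf i * Real.cos ((∑ j, wfun i j * x j) + cfun i) := by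
    have := congrArg (fun p : C(K, ℝ) => p xk) hsum
    rw [← this, ContinuousMap.sum_apply]
    apply Finset.sum_congr rfl
    intro i _
    rw [ContinuousMap.smul_apply, hwc i]
    simp [ridge, smul_eq_mul, hxk]
  -- per-term estimates
  have h3 : ∀ i : Fin m, |Real.cos ((∑ j, wfun i j * x j) + cfun i) - Gi i x| < ε2 := by
    intro i
    have hmem : (∑ j, wfun i j * x j) ∈ Icc (-(Ti i + 1)) (Ti i + 1) := by
      have := hTib i x hx
      obtain ⟨l, r'⟩ := abs_le.mp this
      constructor <;> linarith
    exact hnet i _ hmem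
  have h4 : |(g0 : C(K, ℝ)) xk - ∑ i, cf i * Gi i x| ≤ Csum * ε2 := by
    rw [h2, ← Finset.sum_sub_distrib]
    calc |∑ i, (cf i * Real.cos ((∑ j, wfun i j * x j) + cfun i) - cf i * Gi i x)|
        ≤ ∑ i, |cf i * Real.cos ((∑ j, wfun i j * x j) + cfun i) - cf i * Gi i x| :=
          Finset.abs_sum_le_sum_abs _ _
    _ ≤ ∑ i, |cf i| * ε2 := by
      apply Finset.sum_le_sum
      intro i _
      rw [← mul_sub, abs_mul]
      exact mul_le_mul_of_nonneg_left (h3 i).le (abs_nonneg _)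
    _ = Csum * ε2 := by rw [← Finset.sum_mul]
  have h5 : Csum * ε2 < ε / 2 := by
    have : ε2 * (Csum + 1) = ε / 2 := by
      rw [hε2def]; field_simp
    nlinarith [hε2]
  calc |F x - ∑ i, cf i * Gi i x|
      ≤ |F x - (g0 : C(K, ℝ)) xk| + |(g0 : C(K, ℝ)) xk - ∑ i, cf i * Gi i x| :=
        abs_sub_le _ _ _
  _ < ε / 2 + ε / 2 := by
      apply add_lt_add_of_lt_of_le h1 (le_trans h4 h5.le)
  _ = ε := by ring
end UAT

/-- Recursive evaluation of an FCM in topological order. -/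
noncomputable def evalFCM (d : ℕ) (ord : Fin d → ℕ)
    (F : Fin d → (Fin d → ℝ) → ℝ → ℝ) (e : Fin d → ℝ) (i : Fin d) : ℝ :=
  F i (fun j => if h : ord j < ord i then evalFCM d ord F e j else 0) (e i)
termination_by ord i
decreasing_by exact h

/-- Proposition 2 of the paper: for a continuous FCM on a DAG (parents `Pa`, topological
order `ord`, continuous mechanisms `f i` depending only on the parent coordinates and
the noise), and for every `ε > 0`, there exist one-hidden-layer neural network
mechanisms `fhat i` (with continuous sigmoidal activation `σ`, reading only the parent
coordinates) such that the recursive evaluations `z(e)` and `ẑ(e)` in topological order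
satisfy `‖z(e) − ẑ(e)‖ < ε` for every noise vector `e ∈ [0,1]^d`. -/
theorem stmt6 (d : ℕ) (Pa : Fin d → Finset (Fin d)) (ord : Fin d → ℕ)
    (hord : ∀ i, ∀ j ∈ Pa i, ord j < ord i)
    (σ : ℝ → ℝ) (hσc : Continuous σ)
    (hσ1 : Tendsto σ atTop (nhds 1)) (hσ0 : Tendsto σ atBot (nhds 0))
    (f : Fin d → (Fin d → ℝ) → ℝ → ℝ)
    (hfc : ∀ i, Continuous (fun p : (Fin d → ℝ) × ℝ => f i p.1 p.2))
    (hfloc : ∀ i, ∀ z z' : Fin d → ℝ, ∀ u : ℝ,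
      (∀ j ∈ Pa i, z j = z' j) → f i z u = f i z' u)
    (z : (Fin d → ℝ) → Fin d → ℝ)
    (hz : ∀ e i, z e i = f i (z e) (e i))
    (ε : ℝ) (hε : 0 < ε) :
    ∃ (fhat : Fin d → (Fin d → ℝ) → ℝ → ℝ) (zhat : (Fin d → ℝ) → Fin d → ℝ),
      -- each approximate mechanism is a one-hidden-layer neural network reading
      -- only the parent coordinates and the noise
      (∀ i, ∃ (n : ℕ) (wbar : Fin n → ℝ) (what : Fin n → Fin d → ℝ)
          (w b : Fin n → ℝ) (bbar : ℝ),
        (∀ l j, j ∉ Pa i → what l j = 0) ∧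
        ∀ (zv : Fin d → ℝ) (u : ℝ),
          fhat i zv u = (∑ l, wbar l * σ ((∑ j, what l j * zv j) + w l * u + b l)) + bbar) ∧
      -- `zhat` is the recursive evaluation of the approximate FCM
      (∀ e i, zhat e i = fhat i (zhat e) (e i)) ∧
      -- uniform closeness over all noise vectors in `[0,1]^d`
      (∀ e : Fin d → ℝ, (∀ i, e i ∈ Icc (0:ℝ) 1) → dist (z e) (zhat e) < ε) := by

  classical
  -- continuity of the coordinates of z
  have hzc : ∀ i, Continuous fun e : Fin d → ℝ => z e i := by
    suffices H : ∀ n : ℕ, ∀ i, ord i < n → Continuous fun e : Fin d → ℝ => z e i by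
      intro i; exact H (ord i + 1) i (Nat.lt_succ_self _)
    intro n
    induction n with
    | zero => intro i hi; omega
    | succ n ih =>
      intro i hi
      have hmask : ∀ e, z e i = f i (fun j => if j ∈ Pa i then z e j else 0) (e i) := by
        intro e
        rw [hz e i]
        exact hfloc i _ _ _ (fun j hj => by simp [hj])
      have heq : (fun e : Fin d → ℝ => z e i)
          = fun e => f i (fun j => if j ∈ Pa i then z e j else 0) (e i) := funext hmask
      rw [heq]
      have hmc : Continuous fun e : Fin d → ℝ => (fun j => if j ∈ Pa i then z e j else 0) := by
        apply continuous_pi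
        intro j
        by_cases hj : j ∈ Pa i
        · simp only [hj, if_true]
          exact ih j (by have := hord i j hj; omega)
        · simp only [hj, if_false]
          exact continuous_const
      exact (hfc i).comp (hmc.prodMk (continuous_apply i))
  -- the cube and a bound on z over it
  set cube : Set (Fin d → ℝ) := {e | ∀ i, e i ∈ Icc (0:ℝ) 1} with hcubedef
  have hcube : IsCompact cube := by
    have : cube = Set.pi univ fun _ : Fin d => Icc (0:ℝ) 1 := by
      ext e
      exact ⟨fun h i _ => h i, fun h i => h i (Set.mem_univ i)⟩
    rw [this]
    exact isCompact_univ_pi fun _ => isCompact_Icc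
  have hCex : ∀ i, ∃ C : ℝ, ∀ e ∈ cube, ‖z e i‖ ≤ C := by
    intro i
    exact hcube.exists_bound_of_continuousOn (hzc i).continuousOn
  choose C hC using hCex
  obtain ⟨R, hR1, hRC⟩ := aux_fin_bound C 1 zero_le_one
  have hzR : ∀ e ∈ cube, ∀ i, |z e i| ≤ R := by
    intro e he i
    have := hC i e he
    rw [Real.norm_eq_abs] at this
    exact le_trans this (hRC i)
  -- the reduced mechanisms on parent coordinates plus noise
  set embed : ∀ i : Fin d, (Fin d → ℝ) → ℝ → (Option {j // j ∈ Pa i} → ℝ) :=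
    fun i zv u o => o.elim u (fun s => zv s.val) with hembeddef
  set Fi : ∀ i : Fin d, (Option {j // j ∈ Pa i} → ℝ) → ℝ :=
    fun i y => f i (fun j => if h : j ∈ Pa i then y (some ⟨j, h⟩) else 0) (y none) with hFidef
  have hFic : ∀ i, Continuous (Fi i) := by
    intro i
    have h1 : Continuous fun y : Option {j // j ∈ Pa i} → ℝ =>
        (fun j => if h : j ∈ Pa i then y (some ⟨j, h⟩) else 0 : Fin d → ℝ) := by
      apply continuous_pi
      intro j
      by_cases hj : j ∈ Pa i
      · simp only [hj, dif_pos]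
        exact continuous_apply _
      · simp only [hj, dif_neg, not_false_iff]
        exact continuous_const
    exact (hfc i).comp (h1.prodMk (continuous_apply none))
  have hFieq : ∀ i (zv : Fin d → ℝ) (u : ℝ), f i zv u = Fi i (embed i zv u) := by
    intro i zv u
    simp only [hFidef, hembeddef, Option.elim_some, Option.elim_none]
    exact hfloc i _ _ _ (fun j hj => by simp [hj])
  -- the compact domains
  set KK : ∀ i : Fin d, Set (Option {j // j ∈ Pa i} → ℝ) :=
    fun i => Set.pi univ fun _ => Icc (-(R+1)) (R+1) with hKKdef
  have hKKc : ∀ i, IsCompact (KK i) := fun i => isCompact_univ_pi fun _ => isCompact_Icc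
  -- a common modulus of continuity
  have hmodex : ∀ η : ℝ, 0 < η → ∃ δ, 0 < δ ∧ δ ≤ η / 2 ∧
      ∀ i, ∀ y ∈ KK i, ∀ y' ∈ KK i, dist y y' < δ → |Fi i y - Fi i y'| < η / 2 := by
    intro η hη
    have hδi : ∀ i : Fin d, ∃ δ > 0, ∀ y ∈ KK i, ∀ y' ∈ KK i,
        dist y y' < δ → |Fi i y - Fi i y'| < η / 2 := by
      intro i
      have huc := (hKKc i).uniformContinuousOn_of_continuous (hFic i).continuousOn
      rw [Metric.uniformContinuousOn_iff] at huc
      obtain ⟨δ, hδ, hp⟩ := huc (η / 2) (by linarith)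
      exact ⟨δ, hδ, fun y hy y' hy' hd => by
        have := hp y hy y' hy' hd
        rwa [Real.dist_eq] at this⟩
    choose δf hδf hpf using hδi
    obtain ⟨δ, hδ0, hδc, hδle⟩ := aux_fin_pos_lb δf hδf (η / 2) (by linarith)
    exact ⟨δ, hδ0, hδc, fun i y hy y' hy' hd => hpf i y hy y' hy' (lt_of_lt_of_le hd (hδle i))⟩
  choose Df hDf using hmodex
  set D : ℝ → ℝ := fun η => if h : 0 < η then Df η h else 1 with hDdef
  have hDprop : ∀ η, 0 < η → (0 < D η ∧ D η ≤ η / 2 ∧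
      ∀ i, ∀ y ∈ KK i, ∀ y' ∈ KK i, dist y y' < D η → |Fi i y - Fi i y'| < η / 2) := by
    intro η hη
    simp only [hDdef]
    rw [dif_pos hη]
    exact hDf η hη
  -- the cascade of tolerances
  set b : ℕ → ℝ := fun k => Nat.rec (min ε 1) (fun _ prev => D prev) k with hbdef
  have hb0 : b 0 = min ε 1 := rfl
  have hbsucc : ∀ k, b (k + 1) = D (b k) := fun k => rfl
  have hbpos : ∀ k, 0 < b k := by
    intro k
    induction k with
    | zero => rw [hb0]; exact lt_min hε one_pos
    | succ k ihk =>
      rw [hbsucc]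
      exact (hDprop (b k) ihk).1
  have hbhalf : ∀ k, b (k + 1) ≤ b k / 2 := by
    intro k
    rw [hbsucc]
    exact (hDprop (b k) (hbpos k)).2.1
  have hbmod : ∀ k, ∀ i, ∀ y ∈ KK i, ∀ y' ∈ KK i,
      dist y y' < b (k + 1) → |Fi i y - Fi i y'| < b k / 2 := by
    intro k i y hy y' hy' hd
    rw [hbsucc] at hd
    exact (hDprop (b k) (hbpos k)).2.2 i y hy y' hy' hd
  have hbmono : ∀ k k' : ℕ, k ≤ k' → b k' ≤ b k := by
    intro k k' hk
    induction k' with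
    | zero =>
      have : k = 0 := Nat.le_zero.mp hk
      rw [this]
    | succ k' ihk =>
      rcases Nat.lt_or_ge k (k' + 1) with h | h
      · have := ihk (by omega)
        have h2 := hbhalf k'
        have h3 := hbpos k'
        linarith
      · have : k = k' + 1 := by omega
        rw [this]
  have hble1 : ∀ k, b k ≤ 1 := fun k =>
    le_trans (hbmono 0 k (Nat.zero_le _)) (by rw [hb0]; exact min_le_right _ _)
  have hbleε : ∀ k, b k ≤ ε := fun k =>
    le_trans (hbmono 0 k (Nat.zero_le _)) (by rw [hb0]; exact min_le_left _ _)
  set Mx : ℕ := Finset.univ.sup ord with hMxdef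
  -- choose the networks
  have hnets : ∀ i : Fin d, ∃ G : (Option {j // j ∈ Pa i} → ℝ) → ℝ,
      IsNet σ G ∧ ∀ y ∈ KK i, |Fi i y - G y| < b (Mx - ord i) / 2 := by
    intro i
    exact aux_uat σ hσc hσ1 hσ0 (KK i) (hKKc i) (Fi i) (hFic i)
      (b (Mx - ord i) / 2) (by linarith [hbpos (Mx - ord i)])
  choose G hGnet hGnear using hnets
  choose nn wbf Wf bf bbf hGform using hGnet
  set what : ∀ i : Fin d, Fin (nn i) → Fin d → ℝ :=
    fun i l j => if h : j ∈ Pa i then Wf i l (some ⟨j, h⟩) else 0 with hwhatdef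
  set fhat : Fin d → (Fin d → ℝ) → ℝ → ℝ := fun i zv u =>
    (∑ l, wbf i l * σ ((∑ j, what i l j * zv j) + Wf i l none * u + bf i l)) + bbf i
    with hfhatdef
  -- fhat agrees with the abstract network through the embedding
  have hfhatG : ∀ i (zv : Fin d → ℝ) (u : ℝ), fhat i zv u = G i (embed i zv u) := by
    intro i zv u
    rw [hGform i (embed i zv u)]
    simp only [hfhatdef]
    congr 1
    apply Finset.sum_congr rfl
    intro l _
    congr 2
    rw [Fintype.sum_option]
    have hsum1 : ∑ j, what i l j * zv j = ∑ j ∈ Pa i, what i l j * zv j := by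
      symm
      apply Finset.sum_subset (Finset.subset_univ _)
      intro x _ hx
      simp [hwhatdef, hx]
    have hsum2 : ∑ j ∈ Pa i, what i l j * zv j
        = ∑ s : {j // j ∈ Pa i}, what i l s.val * zv s.val := by
      exact Finset.sum_subtype _ (fun x => Iff.rfl) _
    have hsum3 : ∑ s : {j // j ∈ Pa i}, what i l s.val * zv s.val
        = ∑ s : {j // j ∈ Pa i}, Wf i l (some s) * (embed i zv u) (some s) := by
      apply Finset.sum_congr rfl
      intro s _
      simp only [hwhatdef, s.2, dif_pos, hembeddef, Option.elim_some, Subtype.coe_eta]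
    rw [hsum1, hsum2, hsum3]
    simp only [hembeddef, Option.elim_none]
    ring
  -- fhat depends only on parent coordinates
  have hdep : ∀ i (zv zv' : Fin d → ℝ) (u : ℝ), (∀ j ∈ Pa i, zv j = zv' j) →
      fhat i zv u = fhat i zv' u := by
    intro i zv zv' u hag
    simp only [hfhatdef]
    congr 1
    apply Finset.sum_congr rfl
    intro l _
    have h5 : ∑ j, what i l j * zv j = ∑ j, what i l j * zv' j := by
      apply Finset.sum_congr rfl
      intro j _
      by_cases hj : j ∈ Pa i
      · rw [hag j hj]
      · simp [hwhatdef, hj]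
    rw [h5]
  set zhat : (Fin d → ℝ) → Fin d → ℝ := evalFCM d ord fhat with hzhatdef
  have hzhat : ∀ e i, zhat e i = fhat i (zhat e) (e i) := by
    intro e i
    rw [hzhatdef]
    rw [evalFCM]
    exact hdep i _ _ _ (fun j hj => by rw [dif_pos (hord i j hj)])
  -- the error induction along the topological order
  have herr : ∀ n : ℕ, ∀ i, ord i < n → ∀ e ∈ cube, |z e i - zhat e i| < b (Mx - ord i) := by
    intro n
    induction n with
    | zero => intro i hi; omega
    | succ n ih =>
      intro i hi e he
      have hMxi : ord i ≤ Mx := Finset.le_sup (Finset.mem_univ i)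
      have hpar : ∀ j ∈ Pa i, |z e j - zhat e j| < b (Mx - ord i + 1) := by
        intro j hj
        have hj2 : ord j < ord i := hord i j hj
        have h1 := ih j (by omega) e he
        have h2 : Mx - ord i + 1 ≤ Mx - ord j := by omega
        exact lt_of_lt_of_le h1 (hbmono _ _ h2)
      set y : Option {j // j ∈ Pa i} → ℝ := embed i (z e) (e i) with hydef
      set y' : Option {j // j ∈ Pa i} → ℝ := embed i (zhat e) (e i) with hy'def
      have heIcc := he i
      have hyK : y ∈ KK i := by
        intro o _
        rcases o with _ | s
        · simp only [hydef, hembeddef, Option.elim_none]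
          constructor
          · linarith [heIcc.1]
          · linarith [heIcc.2]
        · simp only [hydef, hembeddef, Option.elim_some]
          have := hzR e he s.val
          obtain ⟨l, r⟩ := abs_le.mp this
          constructor <;> linarith
      have hy'K : y' ∈ KK i := by
        intro o _
        rcases o with _ | s
        · simp only [hy'def, hembeddef, Option.elim_none]
          constructor
          · linarith [heIcc.1]
          · linarith [heIcc.2]
        · simp only [hy'def, hembeddef, Option.elim_some]
          have h1 := hzR e he s.val
          have h2 := hpar s.val s.2
          have h3 := hble1 (Mx - ord i + 1)
          obtain ⟨l1, r1⟩ := abs_le.mp h1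
          obtain ⟨l2, r2⟩ := abs_lt.mp h2
          constructor <;> linarith
      have hdist : dist y y' < b (Mx - ord i + 1) := by
        refine (dist_pi_lt_iff (f := y) (g := y') (hbpos (Mx - ord i + 1))).mpr ?_
        intro o
        rcases o with _ | s
        · simp only [hydef, hy'def, hembeddef, Option.elim_none]
          rw [dist_self]
          exact hbpos (Mx - ord i + 1)
        · simp only [hydef, hy'def, hembeddef, Option.elim_some]
          rw [Real.dist_eq]
          exact hpar s.val s.2
      have hF1 : |Fi i y - Fi i y'| < b (Mx - ord i) / 2 := hbmod _ i y hyK y' hy'K hdist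
      have hF2 : |Fi i y' - G i y'| < b (Mx - ord i) / 2 := hGnear i y' hy'K
      have hz1 : z e i = Fi i y := by rw [hz e i, hFieq i (z e) (e i)]
      have hz2 : zhat e i = G i y' := by rw [hzhat e i, hfhatG i (zhat e) (e i)]
      rw [hz1, hz2]
      calc |Fi i y - G i y'| ≤ |Fi i y - Fi i y'| + |Fi i y' - G i y'| := abs_sub_le _ _ _
      _ < b (Mx - ord i) / 2 + b (Mx - ord i) / 2 := add_lt_add hF1 hF2
      _ = b (Mx - ord i) := by ring
  -- conclude
  refine ⟨fhat, zhat, ?_, hzhat, ?_⟩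
  · intro i
    refine ⟨nn i, wbf i, what i, fun l => Wf i l none, bf i, bbf i, ?_, ?_⟩
    · intro l j hj
      simp [hwhatdef, hj]
    · intro zv u
      rfl
  · intro e he
    have hecube : e ∈ cube := he
    rw [dist_pi_lt_iff hε]
    intro i
    rw [Real.dist_eq]
    have h1 := herr (Mx + 1) i (by have : ord i ≤ Mx := Finset.le_sup (Finset.mem_univ i); omega)
      e hecube
    exact lt_of_lt_of_le h1 (hbleε _)
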